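/- Let 𝔤 be a quadratic Lie algebra, let E and V be finite sets, and let in, out : E → V be bijections (so that (E, V, in, out) is a permutation graph Γ). Then the twisted diagonal 𝔤_Γ := { e ↦ (ξ_{in(e)}, ξ_{out(e)}) : ξ ∈ 𝔤^V } is a Lagrangian Lie subalgebra of the product quadratic Lie algebra (𝔤̄⊕𝔤)^E: it is a Lie subalgebra and it equals its own orthogonal complement with respect to the form ⟨z, z′⟩ = Σ_{e∈E} ( −⟨x_e, x′_e⟩ + ⟨y_e, y′_e⟩ ), where z_e = (x_e, y_e). -/

import Mathlib

section PiProdLie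
variable {L M : Type*} [LieRing L] [LieRing M]

instance prodBracket : Bracket (L × M) (L × M) :=
  ⟨fun x y => (⁅x.1, y.1⁆, ⁅x.2, y.2⁆)⟩

instance prodLieRing : LieRing (L × M) where
  add_lie x y z := Prod.ext (add_lie x.1 y.1 z.1) (add_lie x.2 y.2 z.2)
  lie_add x y z := Prod.ext (lie_add x.1 y.1 z.1) (lie_add x.2 y.2 z.2)
  lie_self x := Prod.ext (lie_self x.1) (lie_self x.2)
  leibniz_lie x y z := Prod.ext (leibniz_lie x.1 y.1 z.1) (leibniz_lie x.2 y.2 z.2)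

instance prodLieAlgebra {R : Type*} [CommRing R] [LieAlgebra R L] [LieAlgebra R M] :
    LieAlgebra R (L × M) where
  lie_smul t x y := Prod.ext (lie_smul t x.1 y.1) (lie_smul t x.2 y.2)

variable {ι : Type*} {F : ι → Type*} [∀ i, LieRing (F i)]

instance piBracket : Bracket (∀ i, F i) (∀ i, F i) :=
  ⟨fun x y i => ⁅x i, y i⁆⟩

instance piLieRing : LieRing (∀ i, F i) where
  add_lie x y z := funext fun i => add_lie (x i) (y i) (z i)
  lie_add x y z := funext fun i => lie_add (x i) (y i) (z i)
  lie_self x := funext fun i => lie_self (x i)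
  leibniz_lie x y z := funext fun i => leibniz_lie (x i) (y i) (z i)

instance piLieAlgebra {R : Type*} [CommRing R] [∀ i, LieAlgebra R (F i)] :
    LieAlgebra R (∀ i, F i) where
  lie_smul t x y := funext fun i => lie_smul t (x i) (y i)

end PiProdLie

/-- The bilinear form of `𝔤̄ ⊕ 𝔤`: `⟨(x,y),(x′,y′)⟩ = −⟨x,x′⟩ + ⟨y,y′⟩`. -/
noncomputable def barSumForm {g : Type*} [AddCommGroup g] [Module ℝ g]
    (B : LinearMap.BilinForm ℝ g) : LinearMap.BilinForm ℝ (g × g) :=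
  B.compl₁₂ (LinearMap.snd ℝ g g) (LinearMap.snd ℝ g g)
    - B.compl₁₂ (LinearMap.fst ℝ g g) (LinearMap.fst ℝ g g)

/-- The bilinear form of `(𝔤̄ ⊕ 𝔤)^E`: the sum over `E` of the forms of `𝔤̄ ⊕ 𝔤`. -/
noncomputable def piBarSumForm {g : Type*} [AddCommGroup g] [Module ℝ g]
    (E : Type*) [Fintype E] (B : LinearMap.BilinForm ℝ g) :
    LinearMap.BilinForm ℝ (E → g × g) :=
  ∑ e : E, (barSumForm B).compl₁₂
    (LinearMap.proj (R := ℝ) (φ := fun _ : E => g × g) e)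
    (LinearMap.proj (R := ℝ) (φ := fun _ : E => g × g) e)

/-- The twisted diagonal `𝔤_Γ = { e ↦ (ξ (in e), ξ (out e)) : ξ ∈ 𝔤^V } ⊆ (𝔤̄ ⊕ 𝔤)^E`. -/
noncomputable def twistedDiagonal {g : Type*} [AddCommGroup g] [Module ℝ g]
    {E V : Type*} (inn out : E → V) : Submodule ℝ (E → g × g) :=
  LinearMap.range (LinearMap.pi fun e =>
    (LinearMap.proj (R := ℝ) (φ := fun _ : V => g) (inn e)).prod
      (LinearMap.proj (R := ℝ) (φ := fun _ : V => g) (out e)))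


lemma mem_twistedDiagonal_iff {g : Type*} [AddCommGroup g] [Module ℝ g]
    {E V : Type*} (inn out : E → V) (z : E → g × g) :
    z ∈ twistedDiagonal (g := g) inn out ↔
      ∃ ξ : V → g, ∀ e, z e = (ξ (inn e), ξ (out e)) := by
  constructor
  · rintro ⟨ξ, rfl⟩
    exact ⟨ξ, fun e => rfl⟩
  · rintro ⟨ξ, hξ⟩
    exact ⟨ξ, by funext e; exact (hξ e).symm⟩

lemma piBarSumForm_apply {g : Type*} [AddCommGroup g] [Module ℝ g]
    {E : Type*} [Fintype E] (B : LinearMap.BilinForm ℝ g) (z w : E → g × g) :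
    piBarSumForm E B z w = ∑ e : E, (B (z e).2 (w e).2 - B (z e).1 (w e).1) := by
  simp [piBarSumForm, barSumForm, LinearMap.sum_apply, Finset.sum_apply]

/-- For a quadratic Lie algebra `𝔤` and a permutation graph `Γ = (E, V, in, out)`
(with `in`, `out` bijections), the twisted diagonal `𝔤_Γ` is a Lagrangian Lie subalgebra of
the product quadratic Lie algebra `(𝔤̄ ⊕ 𝔤)^E`. -/
theorem twistedDiagonal_lagrangian
    {g : Type*} [LieRing g] [LieAlgebra ℝ g] [FiniteDimensional ℝ g]
    (B : LinearMap.BilinForm ℝ g) (hsymm : B.IsSymm) (hnondeg : B.Nondegenerate)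
    (hinv : ∀ x y z : g, B ⁅x, y⁆ z + B y ⁅x, z⁆ = 0)
    {E V : Type*} [Fintype E] [Fintype V]
    (inn out : E → V) (hin : Function.Bijective inn) (hout : Function.Bijective out) :
    -- `𝔤_Γ` is a Lie subalgebra (closed under the componentwise bracket),
    (∀ z ∈ twistedDiagonal (g := g) inn out, ∀ w ∈ twistedDiagonal (g := g) inn out,
        ⁅z, w⁆ ∈ twistedDiagonal (g := g) inn out) ∧
    -- and it is Lagrangian.
    (piBarSumForm E B).orthogonal (twistedDiagonal inn out)
      = twistedDiagonal inn out := by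
  classical
  have memiff := mem_twistedDiagonal_iff (g := g) inn out
  -- isotropy
  have hiso : ∀ z ∈ twistedDiagonal (g := g) inn out,
      ∀ w ∈ twistedDiagonal (g := g) inn out, piBarSumForm E B z w = 0 := by
    intro z hz w hw
    obtain ⟨ξ, hξ⟩ := (memiff z).1 hz
    obtain ⟨η, hη⟩ := (memiff w).1 hw
    rw [piBarSumForm_apply]
    have h1 : ∑ e : E, B (z e).2 (w e).2 = ∑ v : V, B (ξ v) (η v) := by
      refine Fintype.sum_bijective out hout _ _ (fun e => ?_)
      rw [hξ e, hη e]
    have h2 : ∑ e : E, B (z e).1 (w e).1 = ∑ v : V, B (ξ v) (η v) := by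
      refine Fintype.sum_bijective inn hin _ _ (fun e => ?_)
      rw [hξ e, hη e]
    rw [Finset.sum_sub_distrib, h1, h2, sub_self]
  constructor
  · -- Lie subalgebra
    intro z hz w hw
    obtain ⟨ξ, hξ⟩ := (memiff z).1 hz
    obtain ⟨η, hη⟩ := (memiff w).1 hw
    refine (memiff _).2 ⟨fun v => ⁅ξ v, η v⁆, fun e => ?_⟩
    show (⁅(z e).1, (w e).1⁆, ⁅(z e).2, (w e).2⁆) = _
    rw [hξ e, hη e]
  · -- Lagrangian
    apply le_antisymm
    · intro z hz
      have hz' : ∀ ξ : V → g,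
          piBarSumForm E B (fun e => ((ξ (inn e), ξ (out e)) : g × g)) z = 0 := by
        intro ξ
        exact hz _ ((memiff _).2 ⟨ξ, fun e => rfl⟩)
      set ein := Equiv.ofBijective inn hin with hein
      set eout := Equiv.ofBijective out hout with heout
      have key : ∀ ξ : V → g,
          ∑ v : V, B (ξ v) ((z (eout.symm v)).2 - (z (ein.symm v)).1) = 0 := by
        intro ξ
        have := hz' ξ
        rw [piBarSumForm_apply] at this
        have h1 : ∑ e : E, B (ξ (out e)) ((z e).2)
            = ∑ v : V, B (ξ v) ((z (eout.symm v)).2) := by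
          refine Fintype.sum_bijective out hout _ _ (fun e => ?_)
          have : eout.symm (out e) = e := eout.symm_apply_apply e
          rw [this]
        have h2 : ∑ e : E, B (ξ (inn e)) ((z e).1)
            = ∑ v : V, B (ξ v) ((z (ein.symm v)).1) := by
          refine Fintype.sum_bijective inn hin _ _ (fun e => ?_)
          have : ein.symm (inn e) = e := ein.symm_apply_apply e
          rw [this]
        simp only [map_sub]
        rw [Finset.sum_sub_distrib, ← h1, ← h2, ← Finset.sum_sub_distrib, this]
      have hcv : ∀ v : V, (z (eout.symm v)).2 = (z (ein.symm v)).1 := by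
        intro v
        have hker : ∀ u : g, B u ((z (eout.symm v)).2 - (z (ein.symm v)).1) = 0 := by
          intro u
          have := key (Pi.single v u)
          rwa [Fintype.sum_eq_single v (fun v' hv' => by
            rw [Pi.single_eq_of_ne hv', map_zero, LinearMap.zero_apply]),
            Pi.single_eq_same] at this
        have : (z (eout.symm v)).2 - (z (ein.symm v)).1 = 0 := by
          apply hnondeg.1
          intro n
          have := hker n
          rw [← hsymm.eq]
          simpa using this
        exact sub_eq_zero.mp this
      refine (memiff z).2 ⟨fun v => (z (ein.symm v)).1, fun e => ?_⟩
      have he1 : ein.symm (inn e) = e := ein.symm_apply_apply e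
      have he2 : eout.symm (out e) = e := eout.symm_apply_apply e
      have := hcv (out e)
      rw [he2] at this
      show z e = ((z (ein.symm (inn e))).1, (z (ein.symm (out e))).1)
      rw [he1, ← this]
    · intro z hz
      exact fun n hn => hiso n hn z hz
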